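/- Let f : {0,1,2}* → {1,2}* be the 8-uniform morphism defined by f(0) = 11112122, f(1) = 12112222, f(2) = 21111222. If v ∈ {0,1,2}* is square-free, then f(v) contains no forbidden (1,4)-factor; that is, f(v) has no factor of the form x' α x'' where α is a single letter, |x'| = |x''| = n with n ≡ 3 (mod 4), and writing x' = x'₁⋯x'ₙ and x'' = x''₁⋯x''ₙ one has x'₁ ≥ x''₁, x'ₙ ≤ x''ₙ, and x'_i = x''_i for all i ∈ {2,…,n−1}. -/

import Mathlib

/-- A word `w` *encounters* the formula with reversal
`φ_k = x y₁ ⋯ y_k x · ȳ₁ · ⋯ · ȳ_k` if there are nonempty words `X, Y₁, …, Y_k`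
such that `X Y₁ ⋯ Y_k X` is a factor of `w` and each reversed `Yᵢ` is a factor of `w`. -/
def Encounters {A : Type*} (k : ℕ) (w : List A) : Prop :=
  ∃ (X : List A) (Ys : List (List A)),
    Ys.length = k ∧ X ≠ [] ∧ (∀ Y ∈ Ys, Y ≠ []) ∧
    (X ++ Ys.flatten ++ X) <:+: w ∧ (∀ Y ∈ Ys, Y.reverse <:+: w)

/-- A word avoids the formula with reversal `φ_k`. -/
def Avoids {A : Type*} (k : ℕ) (w : List A) : Prop := ¬ Encounters k w

/-- A word is square-free if it has no factor `u ++ u` with `u` nonempty. -/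
def SquareFree {A : Type*} (w : List A) : Prop :=
  ∀ u : List A, u ≠ [] → ¬ (u ++ u) <:+: w

/-- Auxiliary function building the `m`-cyclic `w`-word starting at block index `i`. -/
def cyclicWordFrom {A : Type*} (m : ℕ) (a : ℕ → A) : ℕ → List ℕ → List A
  | _, [] => []
  | i, x :: xs => List.replicate x (a (i % m)) ++ cyclicWordFrom m a (i + 1) xs

/-- The `m`-cyclic `w`-word `C_m(w)` on letters `a 0, …, a (m-1)`:
`(a 0)^{w₁} (a 1)^{w₂} ⋯ (a (m-1))^{w_m} (a 0)^{w_{m+1}} ⋯`. -/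
def cyclicWord {A : Type*} (m : ℕ) (a : ℕ → A) (w : List ℕ) : List A :=
  cyclicWordFrom m a 0 w

/-- `w` (a word over `{1,…,k+1}`) contains a forbidden `(k,m)`-factor:
a factor `x' α₁ ⋯ α_j x''` with `1 ≤ j ≤ k`, each `αᵢ` a letter of `{1,…,k+1}`,
`α₁+⋯+α_j ≥ k`, `|x'| = |x''| = n ≡ m - j (mod m)`, `x'₁ ≥ x''₁`, `x'ₙ ≤ x''ₙ`, and
`x'ᵢ = x''ᵢ` for `i ∈ {2,…,n-1}` (1-indexed). -/
def ForbiddenFactor (k m : ℕ) (w : List ℕ) : Prop :=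
  ∃ x' α x'' : List ℕ,
    (x' ++ α ++ x'') <:+: w ∧
    1 ≤ α.length ∧ α.length ≤ k ∧
    (∀ c ∈ α, 1 ≤ c ∧ c ≤ k + 1) ∧
    k ≤ α.sum ∧
    x'.length = x''.length ∧
    x'.length % m = (m - α.length) % m ∧
    x''.getD 0 0 ≤ x'.getD 0 0 ∧
    x'.getD (x'.length - 1) 0 ≤ x''.getD (x''.length - 1) 0 ∧
    ∀ i, 0 < i → i < x'.length - 1 → x'.getD i 0 = x''.getD i 0

/-- The 8-uniform morphism `f` with `f(0)=11112122`, `f(1)=12112222`, `f(2)=21111222`. -/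
def fMorph (v : List ℕ) : List ℕ :=
  v.flatMap fun c =>
    if c = 0 then [1,1,1,1,2,1,2,2]
    else if c = 1 then [1,2,1,1,2,2,2,2]
    else [2,1,1,1,1,2,2,2]

/-- Image of a letter under the morphism `ρ` with `ρ(1)=22`, `ρ(2)=21`. -/
def rhoLetter (c : ℕ) : List ℕ := if c = 1 then [2,2] else [2,1]

/-- The morphism `ρ : {1,2}* → {1,2}*` with `ρ(1)=22`, `ρ(2)=21`. -/
def rhoWord (v : List ℕ) : List ℕ := v.flatMap rhoLetter

/-- The morphism `d_k` with `d_k(i) = i^{k+1}` for `i ∈ {0,1,2}`. -/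
def dMorph (k : ℕ) (w : List ℕ) : List ℕ := w.flatMap fun i => List.replicate (k + 1) i

/-- The morphism `g` with `g(i) = i·a·b`, where the letters `a, b` are coded `3, 4`. -/
def gMorph (w : List ℕ) : List ℕ := w.flatMap fun i => [i, 3, 4]

/-- The morphism `g'` with `g'(i) = i·a·b·c·d`, where `a,b,c,d` are coded `3,4,5,6`. -/
def g'Morph (w : List ℕ) : List ℕ := w.flatMap fun i => [i, 3, 4, 5, 6]

/-- Insert the letter `c` after every `t` letters of `l`. -/
def insertEvery {A : Type*} (c : A) (t : ℕ) (l : List A) : List A :=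
  if _h : l.length ≤ t ∨ t = 0 then l
  else l.take t ++ c :: insertEvery c t (l.drop t)
termination_by l.length
decreasing_by
  simp only [List.length_drop]
  omega

/-- `φ_k` is `n`-avoidable: infinitely many finite words over an `n`-letter alphabet avoid it. -/
def IsNAvoidable (k n : ℕ) : Prop := {w : List (Fin n) | Avoids k w}.Infinite


def fWord (c : ℕ) : List ℕ :=
  if c = 0 then [1,1,1,1,2,1,2,2]
  else if c = 1 then [1,2,1,1,2,2,2,2]
  else [2,1,1,1,1,2,2,2]

def fLet (c j : ℕ) : ℕ := (fWord c).getD j 0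

lemma fWord_length (c : ℕ) : (fWord c).length = 8 := by
  unfold fWord; split_ifs <;> rfl

lemma fMorph_cons (c : ℕ) (v : List ℕ) : fMorph (c :: v) = fWord c ++ fMorph v := by
  simp [fMorph, fWord, List.flatMap_cons]

lemma fMorph_length (v : List ℕ) : (fMorph v).length = 8 * v.length := by
  induction v with
  | nil => rfl
  | cons c v ih =>
    rw [fMorph_cons, List.length_append, fWord_length, ih, List.length_cons]
    ring

lemma fMorph_getD (v : List ℕ) (i : ℕ) (h : i < 8 * v.length) :
    (fMorph v).getD i 0 = fLet (v.getD (i / 8) 0) (i % 8) := by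
  induction v generalizing i with
  | nil => simp at h
  | cons c v ih =>
    rw [fMorph_cons]
    rcases Nat.lt_or_ge i 8 with hi | hi
    · rw [List.getD_append _ _ _ _ (by rw [fWord_length]; exact hi)]
      have h1 : i / 8 = 0 := by omega
      have h2 : i % 8 = i := by omega
      rw [h1, h2]
      rfl
    · rw [List.getD_append_right _ _ _ _ (by rw [fWord_length]; exact hi), fWord_length]
      rw [ih (i - 8) (by simp at h; omega)]
      have h1 : (i - 8) / 8 = i / 8 - 1 := by omega
      have h2 : (i - 8) % 8 = i % 8 := by omega
      obtain ⟨k, hk⟩ : ∃ k, i / 8 = k + 1 := ⟨i / 8 - 1, by omega⟩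
      rw [h1, h2, hk]
      simp

lemma getD_mem_le (v : List ℕ) (hv : ∀ c ∈ v, c ≤ 2) (b : ℕ) (hb : b < v.length) :
    v.getD b 0 ≤ 2 := by
  rw [List.getD_eq_getElem _ _ hb]
  exact hv _ (List.getElem_mem hb)

lemma fLet_inj01 (c c' : ℕ) (hc : c ≤ 2) (hc' : c' ≤ 2)
    (h0 : fLet c 0 = fLet c' 0) (h1 : fLet c 1 = fLet c' 1) : c = c' := by
  interval_cases c <;> interval_cases c' <;> first | rfl | (exfalso; revert h0 h1; decide)

lemma fLet_inj45 (c c' : ℕ) (hc : c ≤ 2) (hc' : c' ≤ 2)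
    (h0 : fLet c 4 = fLet c' 4) (h1 : fLet c 5 = fLet c' 5) : c = c' := by
  interval_cases c <;> interval_cases c' <;> first | rfl | (exfalso; revert h0 h1; decide)

lemma fLet_col2 (c : ℕ) (hc : c ≤ 2) : fLet c 2 = 1 := by interval_cases c <;> decide
lemma fLet_col6 (c : ℕ) (hc : c ≤ 2) : fLet c 6 = 2 := by interval_cases c <;> decide

lemma getD_middle (s m t : List ℕ) (i : ℕ) (h : i < m.length) :
    (s ++ m ++ t).getD (s.length + i) 0 = m.getD i 0 := by
  rw [List.append_assoc, List.getD_append_right _ _ _ _ (by omega),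
    Nat.add_sub_cancel_left, List.getD_append _ _ _ _ h]


/-- If `v ∈ {0,1,2}*` is square-free then `f(v)` contains no forbidden
`(1,4)`-factor. -/
theorem fMorph_no_forbiddenFactor (v : List ℕ) (hv : ∀ c ∈ v, c ≤ 2)
    (hsf : SquareFree v) : ¬ ForbiddenFactor 1 4 (fMorph v) := by
  rintro ⟨x', α, x'', hinf, hα1, hα2, -, -, hlen, hmod, hI1, hI2, hmid⟩
  have hα : α.length = 1 := le_antisymm hα2 hα1
  obtain ⟨s, t, hw⟩ := hinf
  set W := fMorph v with hWdef
  set p := s.length with hpdef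
  set n := x'.length with hndef
  have hmod4 : n % 4 = 3 := by rw [hα] at hmod; omega
  have hn3 : 3 ≤ n := by omega
  have hWlen : W.length = 8 * v.length := fMorph_length v
  have hbound : p + 2 * n + 1 ≤ 8 * v.length := by
    have := congrArg List.length hw
    simp [List.length_append, hα, ← hlen] at this
    omega
  -- getD transfer
  have hx' : ∀ i, i < n → x'.getD i 0 = W.getD (p + i) 0 := by
    intro i hi
    rw [← hw, getD_middle s (x' ++ α ++ x'') t i (by simp [hα]; omega),
      List.getD_append (x' ++ α) x'' 0 i (by simp [hα]; omega),
      List.getD_append x' α 0 i (by omega)]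
  have hx'' : ∀ i, i < n → x''.getD i 0 = W.getD (p + (n + 1 + i)) 0 := by
    intro i hi
    rw [← hw, getD_middle s (x' ++ α ++ x'') t (n + 1 + i) (by simp [hα]; omega),
      List.getD_append_right (x' ++ α) x'' 0 (n + 1 + i)
        (by simp only [List.length_append, hα]; omega)]
    rw [show (x' ++ α).length = n + 1 by simp [hα, hndef]]
    congr 1
    omega
  have E : ∀ i, 0 < i → i < n - 1 → W.getD (p + i) 0 = W.getD (p + n + 1 + i) 0 := by
    intro i h1 h2
    have := hmid i h1 h2
    rw [hx' i (by omega), hx'' i (by omega)] at this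
    rw [this]
    congr 1
    omega
  have I1 : W.getD (p + n + 1) 0 ≤ W.getD p 0 := by
    have := hI1
    rw [hx' 0 (by omega), hx'' 0 (by omega)] at this
    simpa [Nat.add_assoc] using this
  have I2 : W.getD (p + n - 1) 0 ≤ W.getD (p + 2 * n) 0 := by
    have := hI2
    rw [hx' (n - 1) (by omega)] at this
    rw [← hlen] at this
    rw [hx'' (n - 1) (by omega)] at this
    have e1 : p + (n - 1) = p + n - 1 := by omega
    have e2 : p + (n + 1 + (n - 1)) = p + 2 * n := by omega
    rw [e1, e2] at this
    exact this
  have hval : ∀ q, q < 8 * v.length → W.getD q 0 = fLet (v.getD (q / 8) 0) (q % 8) :=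
    fun q hq => fMorph_getD v q hq
  have hlet : ∀ b, b < v.length → v.getD b 0 ≤ 2 := getD_mem_le v hv
  have h8 : n % 8 = 3 ∨ n % 8 = 7 := by omega
  rcases h8 with h8 | h8
  · -- n ≡ 3 mod 8
    rcases eq_or_ne n 3 with h3 | hne3
    · -- n = 3 : finite case analysis
      have e1 := E 1 (by omega) (by omega)
      have i1 := I1
      have i2 := I2
      rw [h3] at e1 i1 i2
      rw [hval (p + 1) (by omega), hval (p + 3 + 1 + 1) (by omega)] at e1
      rw [hval (p + 3 + 1) (by omega), hval p (by omega)] at i1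
      rw [hval (p + 3 - 1) (by omega), hval (p + 2 * 3) (by omega)] at i2
      have hb0 : p / 8 < v.length := by omega
      have hc0 := hlet (p / 8) hb0
      have hr : p % 8 = 0 ∨ p % 8 = 1 ∨ p % 8 = 2 ∨ p % 8 = 3 ∨ p % 8 = 4 ∨
          p % 8 = 5 ∨ p % 8 = 6 ∨ p % 8 = 7 := by omega
      -- helper rewrites
      rcases hr with hr | hr | hr | hr | hr | hr | hr | hr
      · -- r = 0 : all in block p/8
        rw [show (p+1)/8 = p/8 by omega, show (p+1)%8 = 1 by omega,
          show (p+3+1+1)/8 = p/8 by omega, show (p+3+1+1)%8 = 5 by omega] at e1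
        rw [show (p+3+1)/8 = p/8 by omega, show (p+3+1)%8 = 4 by omega,
          show p%8 = 0 from hr] at i1
        have h0 : v.getD (p/8) 0 = 0 ∨ v.getD (p/8) 0 = 1 ∨ v.getD (p/8) 0 = 2 := by omega
        rcases h0 with h0 | h0 | h0 <;> rw [h0] at e1 i1 <;> revert e1 i1 <;> decide
      · rw [show (p+1)/8 = p/8 by omega, show (p+1)%8 = 2 by omega,
          show (p+3+1+1)/8 = p/8 by omega, show (p+3+1+1)%8 = 6 by omega] at e1
        have h0 : v.getD (p/8) 0 = 0 ∨ v.getD (p/8) 0 = 1 ∨ v.getD (p/8) 0 = 2 := by omega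
        rcases h0 with h0 | h0 | h0 <;> rw [h0] at e1 <;> revert e1 <;> decide
      · rw [show (p+3+1)/8 = p/8 by omega, show (p+3+1)%8 = 6 by omega,
          show p%8 = 2 from hr] at i1
        have h0 : v.getD (p/8) 0 = 0 ∨ v.getD (p/8) 0 = 1 ∨ v.getD (p/8) 0 = 2 := by omega
        rcases h0 with h0 | h0 | h0 <;> rw [h0] at i1 <;> revert i1 <;> decide
      · rw [show (p+3+1)/8 = p/8 by omega, show (p+3+1)%8 = 7 by omega,
          show p%8 = 3 from hr] at i1
        have h0 : v.getD (p/8) 0 = 0 ∨ v.getD (p/8) 0 = 1 ∨ v.getD (p/8) 0 = 2 := by omega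
        rcases h0 with h0 | h0 | h0 <;> rw [h0] at i1 <;> revert i1 <;> decide
      · -- r = 4 : p+2 offset 6 block b ; p+6 offset 2 block b+1
        have hb1 : p / 8 + 1 < v.length := by omega
        have hc1 := hlet (p / 8 + 1) hb1
        rw [show (p+3-1)/8 = p/8 by omega, show (p+3-1)%8 = 6 by omega,
          show (p+2*3)/8 = p/8+1 by omega, show (p+2*3)%8 = 2 by omega] at i2
        rw [fLet_col6 _ hc0, fLet_col2 _ hc1] at i2
        omega
      · have hb1 : p / 8 + 1 < v.length := by omega
        have hc1 := hlet (p / 8 + 1) hb1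
        rw [show (p+3-1)/8 = p/8 by omega, show (p+3-1)%8 = 7 by omega,
          show (p+2*3)/8 = p/8+1 by omega, show (p+2*3)%8 = 3 by omega] at i2
        have h0 : v.getD (p/8) 0 = 0 ∨ v.getD (p/8) 0 = 1 ∨ v.getD (p/8) 0 = 2 := by omega
        have h1 : v.getD (p/8+1) 0 = 0 ∨ v.getD (p/8+1) 0 = 1 ∨ v.getD (p/8+1) 0 = 2 := by omega
        rcases h0 with h0 | h0 | h0 <;> rcases h1 with h1 | h1 | h1 <;>
          rw [h0, h1] at i2 <;> revert i2 <;> decide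
      · have hb1 : p / 8 + 1 < v.length := by omega
        have hc1 := hlet (p / 8 + 1) hb1
        rw [show (p+1)/8 = p/8 by omega, show (p+1)%8 = 7 by omega,
          show (p+3+1+1)/8 = p/8+1 by omega, show (p+3+1+1)%8 = 3 by omega] at e1
        have h0 : v.getD (p/8) 0 = 0 ∨ v.getD (p/8) 0 = 1 ∨ v.getD (p/8) 0 = 2 := by omega
        have h1 : v.getD (p/8+1) 0 = 0 ∨ v.getD (p/8+1) 0 = 1 ∨ v.getD (p/8+1) 0 = 2 := by omega
        rcases h0 with h0 | h0 | h0 <;> rcases h1 with h1 | h1 | h1 <;>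
          rw [h0, h1] at e1 <;> revert e1 <;> decide
      · have hb1 : p / 8 + 1 < v.length := by omega
        have hc1 := hlet (p / 8 + 1) hb1
        rw [show (p+1)/8 = p/8+1 by omega, show (p+1)%8 = 0 by omega,
          show (p+3+1+1)/8 = p/8+1 by omega, show (p+3+1+1)%8 = 4 by omega] at e1
        have h1 : v.getD (p/8+1) 0 = 0 ∨ v.getD (p/8+1) 0 = 1 ∨ v.getD (p/8+1) 0 = 2 := by omega
        rcases h1 with h1 | h1 | h1 <;> rw [h1] at e1 <;> revert e1 <;> decide
    · -- n ≥ 11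
      have hn11 : 11 ≤ n := by omega
      set i := (9 - p % 8) % 8 + 1 with hidef
      have hi1 : 0 < i := by omega
      have hi8 : i ≤ 8 := by omega
      have hres : (p + i) % 8 = 2 := by omega
      have hres' : (p + n + 1 + i) % 8 = 6 := by omega
      have he := E i hi1 (by omega)
      rw [hval (p + i) (by omega), hval (p + n + 1 + i) (by omega), hres, hres'] at he
      rw [fLet_col2 _ (hlet _ (by omega)), fLet_col6 _ (hlet _ (by omega))] at he
      exact absurd he (by decide)
  · -- n ≡ 7 mod 8 : synchronization
    obtain ⟨e, hne⟩ : ∃ e, n + 1 = 8 * e := ⟨(n + 1) / 8, by omega⟩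
    have he1 : 1 ≤ e := by omega
    have key : ∀ b o, o ≤ 7 → p + 1 ≤ 8 * b + o → 8 * b + o ≤ p + n - 2 →
        fLet (v.getD b 0) o = fLet (v.getD (b + e) 0) o := by
      intro b o ho h1 h2
      have hE := E (8 * b + o - p) (by omega) (by omega)
      rw [hval (p + (8 * b + o - p)) (by omega),
        hval (p + n + 1 + (8 * b + o - p)) (by omega)] at hE
      rw [show (p + (8*b+o-p))/8 = b by omega, show (p + (8*b+o-p))%8 = o by omega,
        show (p + n + 1 + (8*b+o-p))/8 = b + e by omega,
        show (p + n + 1 + (8*b+o-p))%8 = o by omega] at hE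
      exact hE
    have step : ∀ b, ((p + 1 ≤ 8 * b ∧ 8 * b + 1 ≤ p + n - 2) ∨
        (p + 1 ≤ 8 * b + 4 ∧ 8 * b + 5 ≤ p + n - 2)) →
        v.getD b 0 = v.getD (b + e) 0 := by
      intro b hcase
      have hb0 : b < v.length := by rcases hcase with ⟨h1, h2⟩ | ⟨h1, h2⟩ <;> omega
      have hbe : b + e < v.length := by rcases hcase with ⟨h1, h2⟩ | ⟨h1, h2⟩ <;> omega
      rcases hcase with ⟨h1, h2⟩ | ⟨h1, h2⟩
      · exact fLet_inj01 _ _ (hlet b hb0) (hlet _ hbe)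
          (key b 0 (by omega) (by omega) (by omega)) (key b 1 (by omega) (by omega) (by omega))
      · exact fLet_inj45 _ _ (hlet b hb0) (hlet _ hbe)
          (key b 4 (by omega) (by omega) (by omega)) (key b 5 (by omega) (by omega) (by omega))
    obtain ⟨a, ha⟩ : ∃ a, (p + 1 ≤ 8 * a ∧ 8 * a ≤ p + 4) ∨ (8 * a ≤ p ∧ p ≤ 8 * a + 3) := by
      rcases Nat.lt_or_ge ((p + 1) % 8) 5 with h | h
      · exact ⟨(p + 1) / 8, by omega⟩
      · exact ⟨(p + 1) / 8 + 1, by omega⟩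
    have hsq : ∀ j, j < e → v.getD (a + j) 0 = v.getD (a + j + e) 0 := by
      intro j hj
      rcases ha with ha | ha
      · exact step (a + j) (Or.inl ⟨by omega, by omega⟩)
      · rcases Nat.eq_zero_or_pos j with rfl | hj1
        · exact step (a + 0) (Or.inr ⟨by omega, by omega⟩)
        · exact step (a + j) (Or.inl ⟨by omega, by omega⟩)
    have hav : a + 2 * e ≤ v.length := by
      rcases ha with ha | ha <;> omega
    -- build the square
    have hulen : ((v.drop a).take e).length = e := by
      rw [List.length_take, List.length_drop]; omega
    have hu12 : (v.drop a).take e = ((v.drop a).drop e).take e := by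
      apply List.ext_getElem
      · rw [List.length_take, List.length_take, List.length_drop, List.length_drop,
          List.length_drop]
        omega
      · intro j hj1 hj2
        rw [List.getElem_take, List.getElem_drop, List.getElem_take, List.getElem_drop,
          List.getElem_drop]
        have hje : j < e := by
          rw [List.length_take, List.length_drop] at hj1; omega
        have hs := hsq j hje
        rw [List.getD_eq_getElem _ _ (show a + j < v.length by omega),
          List.getD_eq_getElem _ _ (show a + j + e < v.length by omega)] at hs
        simp only [show a + (e + j) = a + j + e from by omega]
        exact hs
    have hinf2 : (v.drop a).take e ++ ((v.drop a).drop e).take e <:+: v := by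
      rw [← List.take_add]
      exact (List.take_prefix (e + e) (v.drop a)).isInfix.trans
        (List.drop_suffix a v).isInfix
    rw [← hu12] at hinf2
    exact hsf ((v.drop a).take e)
      (by intro h; rw [h] at hulen; simp at hulen; omega) hinf2
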